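/- If G is a simple connected graph with n vertices and diameter d ≥ 1, then the rubbling number satisfies ρ(G) ≤ (n − d + 1)·(2^(d−1) − 1) + 2. -/

import Mathlib

open Finset

variable {V : Type*}

/-- A pebbling move: remove two pebbles at a vertex `v` and add one pebble at an
adjacent vertex `u`. -/
def IsPebblingMove (G : SimpleGraph V) (p p' : V → ℕ) : Prop :=
  ∃ v u, G.Adj v u ∧ 2 ≤ p v ∧
    p' v = p v - 2 ∧ p' u = p u + 1 ∧ ∀ z, z ≠ v → z ≠ u → p' z = p z

/-- A strict rubbling move: remove one pebble each at distinct vertices `v` and `w`,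
both adjacent to `u`, and add one pebble at `u`. -/
def IsStrictRubblingMove (G : SimpleGraph V) (p p' : V → ℕ) : Prop :=
  ∃ v w u, v ≠ w ∧ G.Adj v u ∧ G.Adj w u ∧ 1 ≤ p v ∧ 1 ≤ p w ∧
    p' v = p v - 1 ∧ p' w = p w - 1 ∧ p' u = p u + 1 ∧
    ∀ z, z ≠ v → z ≠ w → z ≠ u → p' z = p z

/-- A rubbling move is a pebbling move or a strict rubbling move. -/
def IsRubblingMove (G : SimpleGraph V) (p p' : V → ℕ) : Prop :=
  IsPebblingMove G p p' ∨ IsStrictRubblingMove G p p'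

/-- A vertex `x` is reachable from the pebble distribution `p` if some executable
sequence of rubbling moves leads to a distribution with a pebble on `x`. -/
def RubblingReachable (G : SimpleGraph V) (p : V → ℕ) (x : V) : Prop :=
  ∃ q : V → ℕ, Relation.ReflTransGen (IsRubblingMove G) p q ∧ 1 ≤ q x

/-- The rubbling number: the least `m` such that every vertex is reachable from
every pebble distribution of size `m`. -/
noncomputable def rubblingNumber (G : SimpleGraph V) [Fintype V] : ℕ :=
  sInf {m | ∀ p : V → ℕ, ∑ v, p v = m → ∀ x, RubblingReachable G p x}

/-- The optimal rubbling number: the least size of a pebble distribution from which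
every vertex is reachable. -/
noncomputable def optimalRubblingNumber (G : SimpleGraph V) [Fintype V] : ℕ :=
  sInf {m | ∃ p : V → ℕ, ∑ v, p v = m ∧ ∀ x, RubblingReachable G p x}

set_option linter.unusedSectionVars false

section Aux

variable {G : SimpleGraph V} [DecidableEq V]

lemma move_add (r : V → ℕ) {p q : V → ℕ} (h : IsRubblingMove G p q) :
    IsRubblingMove G (fun z => p z + r z) (fun z => q z + r z) := by
  rcases h with ⟨v, u, hadj, h2, hv, hu, ho⟩ | ⟨v, w, u, hvw, ha1, ha2, h1, h2, hv, hw, hu, ho⟩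
  · refine Or.inl ⟨v, u, hadj, ?_, ?_, ?_, ?_⟩
    · show 2 ≤ p v + r v; omega
    · show q v + r v = p v + r v - 2; omega
    · show q u + r u = p u + r u + 1; omega
    · intro z hz1 hz2; show q z + r z = p z + r z; rw [ho z hz1 hz2]
  · refine Or.inr ⟨v, w, u, hvw, ha1, ha2, ?_, ?_, ?_, ?_, ?_, ?_⟩
    · show 1 ≤ p v + r v; omega
    · show 1 ≤ p w + r w; omega
    · show q v + r v = p v + r v - 1; omega
    · show q w + r w = p w + r w - 1; omega
    · show q u + r u = p u + r u + 1; omega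
    · intro z hz1 hz2 hz3; show q z + r z = p z + r z; rw [ho z hz1 hz2 hz3]

lemma rtg_add (r : V → ℕ) {p q : V → ℕ}
    (h : Relation.ReflTransGen (IsRubblingMove G) p q) :
    Relation.ReflTransGen (IsRubblingMove G) (fun z => p z + r z) (fun z => q z + r z) := by
  induction h with
  | refl => exact Relation.ReflTransGen.refl
  | tail _ hmove ih => exact ih.tail (move_add r hmove)

lemma pile_moves {a b : V} (hab : G.Adj a b) (r : V → ℕ) (s : ℕ) :
    ∀ m t : ℕ, Relation.ReflTransGen (IsRubblingMove G)
      (fun z => if z = a then s + 2 * m else if z = b then t else r z)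
      (fun z => if z = a then s else if z = b then t + m else r z) := by
  have hne : a ≠ b := hab.ne
  intro m
  induction m with
  | zero =>
    intro t
    have heq : (fun z => if z = a then s + 2 * 0 else if z = b then t else r z)
        = (fun z => if z = a then s else if z = b then t + 0 else r z) := by
      funext z; split_ifs <;> omega
    rw [heq]
  | succ m ih =>
    intro t
    have step : IsRubblingMove G
        (fun z => if z = a then s + 2 * (m + 1) else if z = b then t else r z)
        (fun z => if z = a then s + 2 * m else if z = b then t + 1 else r z) := by
      refine Or.inl ⟨a, b, hab, ?_, ?_, ?_, ?_⟩
      · show 2 ≤ if a = a then s + 2 * (m + 1) else if a = b then t else r a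
        simp only [if_pos]
        omega
      · show (if a = a then s + 2 * m else if a = b then t + 1 else r a)
            = (if a = a then s + 2 * (m + 1) else if a = b then t else r a) - 2
        simp; omega
      · show (if b = a then s + 2 * m else if b = b then t + 1 else r b)
            = (if b = a then s + 2 * (m + 1) else if b = b then t else r b) + 1
        simp [Ne.symm hne]
      · intro z hz1 hz2
        show (if z = a then s + 2 * m else if z = b then t + 1 else r z)
            = (if z = a then s + 2 * (m + 1) else if z = b then t else r z)
        simp [hz1, hz2]
    have heq : (fun z => if z = a then s else if z = b then t + 1 + m else r z)
        = (fun z => if z = a then s else if z = b then t + (m + 1) else r z) := by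
      funext z; split_ifs <;> omega
    exact Relation.ReflTransGen.head step (heq ▸ ih (t + 1))

lemma weight_reach (k : ℕ) (u : ℕ → V)
    (hadj : ∀ i, i < k → G.Adj (u i) (u (i + 1)))
    (hinj : ∀ i, i ≤ k → ∀ j, j ≤ k → u i = u j → i = j)
    (p : V → ℕ)
    (hw : 2 ^ k ≤ ∑ i ∈ Finset.range (k + 1), p (u i) * 2 ^ (k - i)) :
    RubblingReachable G p (u 0) := by
  induction k generalizing p with
  | zero =>
    refine ⟨p, Relation.ReflTransGen.refl, ?_⟩
    simpa using hw
  | succ k ih =>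
    set c := p (u (k + 1)) with hc
    have hne : u (k + 1) ≠ u k := by
      intro h
      have := hinj (k + 1) le_rfl k (by omega) h
      omega
    have hadjk : G.Adj (u (k + 1)) (u k) := (hadj k (by omega)).symm
    have hp : p = (fun z => if z = u (k + 1) then c % 2 + 2 * (c / 2)
        else if z = u k then p (u k) else p z) := by
      funext z
      split_ifs with h1 h2
      · rw [h1]; omega
      · rw [h2]
      · rfl
    have hmoves : Relation.ReflTransGen (IsRubblingMove G) p
        (fun z => if z = u (k + 1) then c % 2
          else if z = u k then p (u k) + c / 2 else p z) := by
      nth_rewrite 1 [hp]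
      exact pile_moves hadjk p (c % 2) (c / 2) (p (u k))
    set p' : V → ℕ := fun z => if z = u (k + 1) then c % 2
        else if z = u k then p (u k) + c / 2 else p z with hp'
    have hres := ih (fun i hi => hadj i (by omega))
      (fun i hi j hj hij => hinj i (by omega) j (by omega) hij) p' ?_
    · obtain ⟨q, hq1, hq2⟩ := hres
      exact ⟨q, hmoves.trans hq1, hq2⟩
    · have hsum' : ∑ i ∈ Finset.range (k + 1), p' (u i) * 2 ^ (k - i)
          = (∑ i ∈ Finset.range (k + 1), p (u i) * 2 ^ (k - i)) + c / 2 := by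
        rw [Finset.sum_range_succ, Finset.sum_range_succ]
        have h1 : ∀ i ∈ Finset.range k, p' (u i) * 2 ^ (k - i) = p (u i) * 2 ^ (k - i) := by
          intro i hi
          rw [Finset.mem_range] at hi
          have e1 : u i ≠ u (k + 1) := fun h => by
            have := hinj i (by omega) (k + 1) le_rfl h; omega
          have e2 : u i ≠ u k := fun h => by
            have := hinj i (by omega) k (by omega) h; omega
          have : p' (u i) = p (u i) := by simp [hp', e1, e2]
          rw [this]
        rw [Finset.sum_congr rfl h1]
        have e3 : p' (u k) = p (u k) + c / 2 := by
          simp [hp', hne.symm]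
        rw [e3, Nat.sub_self, pow_zero]
        ring
      have hsum2 : ∑ i ∈ Finset.range (k + 2), p (u i) * 2 ^ (k + 1 - i)
          = 2 * (∑ i ∈ Finset.range (k + 1), p (u i) * 2 ^ (k - i)) + c := by
        rw [Finset.sum_range_succ]
        have h1 : ∀ i ∈ Finset.range (k + 1),
            p (u i) * 2 ^ (k + 1 - i) = 2 * (p (u i) * 2 ^ (k - i)) := by
          intro i hi
          rw [Finset.mem_range] at hi
          have : k + 1 - i = (k - i) + 1 := by omega
          rw [this, pow_succ]
          ring
        rw [Finset.sum_congr rfl h1, ← Finset.mul_sum]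
        simp [hc]
      rw [show k + 1 + 1 = k + 2 from rfl, hsum2] at hw
      rw [hsum']
      have hpow : (2 : ℕ) ^ (k + 1) = 2 * 2 ^ k := by rw [pow_succ]; ring
      omega

lemma exists_geodesic (hconn : G.Connected) (x v : V) :
    ∃ u : ℕ → V, u 0 = x ∧ u (G.dist x v) = v ∧
      (∀ i, i < G.dist x v → G.Adj (u i) (u (i + 1))) ∧
      (∀ i, i ≤ G.dist x v → G.dist x (u i) = i) := by
  obtain ⟨w, hw⟩ := (hconn x v).exists_walk_length_eq_dist
  refine ⟨fun i => w.getVert i, w.getVert_zero, ?_, fun i hi => w.adj_getVert_succ (by omega), ?_⟩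
  · rw [← hw]; exact w.getVert_length
  · have hup : ∀ i, i ≤ w.length → G.dist x (w.getVert i) ≤ i := by
      intro i
      induction i with
      | zero => intro _; rw [w.getVert_zero, SimpleGraph.dist_self]
      | succ i ih =>
        intro hi
        have h1 : G.dist x (w.getVert i) ≤ i := ih (by omega)
        have h2 : G.dist (w.getVert i) (w.getVert (i + 1)) ≤ 1 := by
          have := SimpleGraph.dist_le (w.adj_getVert_succ (by omega : i < w.length)).toWalk
          simpa using this
        have := hconn.dist_triangle (u := x) (v := w.getVert i) (w := w.getVert (i + 1))
        omega
    have hdown : ∀ j, ∀ i, i + j = w.length → G.dist (w.getVert i) v ≤ j := by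
      intro j
      induction j with
      | zero =>
        intro i hi
        have : w.getVert i = v := by rw [show i = w.length by omega]; exact w.getVert_length
        rw [this, SimpleGraph.dist_self]
      | succ j ih =>
        intro i hi
        have h2 : G.dist (w.getVert i) (w.getVert (i + 1)) ≤ 1 := by
          have := SimpleGraph.dist_le (w.adj_getVert_succ (by omega : i < w.length)).toWalk
          simpa using this
        have h3 : G.dist (w.getVert (i + 1)) v ≤ j := ih (i + 1) (by omega)
        have := hconn.dist_triangle (u := w.getVert i) (v := w.getVert (i + 1)) (w := v)
        omega
    intro i hi
    show G.dist x (w.getVert i) = i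
    have h1 : G.dist x (w.getVert i) ≤ i := hup i (by omega)
    have h2 : G.dist (w.getVert i) v ≤ w.length - i := hdown (w.length - i) i (by omega)
    have h3 := hconn.dist_triangle (u := x) (v := w.getVert i) (w := v)
    omega

/-- From a single pile of `c ≥ 2^(dist x v - 1)` pebbles at `v ≠ x`, we can put a pebble
on some neighbor of `x`. -/
lemma deliver (hconn : G.Connected) {x v : V} (hxv : v ≠ x) (c : ℕ)
    (hc : 2 ^ (G.dist x v - 1) ≤ c) :
    ∃ a, G.Adj x a ∧ ∃ q, Relation.ReflTransGen (IsRubblingMove G)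
      (fun z => if z = v then c else 0) q ∧ 1 ≤ q a := by
  obtain ⟨u, hu0, huk, hadj, hdist⟩ := exists_geodesic hconn x v
  set k := G.dist x v with hk
  have hk1 : 1 ≤ k := hconn.pos_dist_of_ne (Ne.symm hxv)
  have hxa : G.Adj x (u 1) := by rw [← hu0]; exact hadj 0 (by omega)
  refine ⟨u 1, hxa, ?_⟩
  have hres := weight_reach (G := G) (k - 1) (fun i => u (i + 1))
    (fun i hi => hadj (i + 1) (by omega))
    (fun i hi j hj hij => by
      have hdi := hdist (i + 1) (by omega)
      have hdj := hdist (j + 1) (by omega)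
      have hij' : u (i + 1) = u (j + 1) := hij
      have : i + 1 = j + 1 := by rw [← hdi, ← hdj, hij']
      omega)
    (fun z => if z = v then c else 0) ?_
  · exact hres
  · have hmem : k - 1 ∈ Finset.range (k - 1 + 1) := by
      rw [Finset.mem_range]; omega
    have hterm : (fun z => if z = v then c else 0) (u (k - 1 + 1)) * 2 ^ (k - 1 - (k - 1)) = c := by
      have : k - 1 + 1 = k := by omega
      rw [this, huk, Nat.sub_self, pow_zero]
      simp
    calc 2 ^ (k - 1) ≤ c := hc
      _ = (fun z => if z = v then c else 0) (u (k - 1 + 1)) * 2 ^ (k - 1 - (k - 1)) := hterm.symm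
      _ ≤ _ := Finset.single_le_sum (f := fun i => (fun z => if z = v then c else 0) (u (i + 1)) * 2 ^ (k - 1 - i)) (fun i _ => Nat.zero_le _) hmem

lemma reach_last {x a b : V} (hxa : G.Adj x a) (hxb : G.Adj x b) (q : V → ℕ)
    (hab : a ≠ b ∨ 2 ≤ q a) (ha : 1 ≤ q a) (hb : 1 ≤ q b) :
    ∃ q', IsRubblingMove G q q' ∧ 1 ≤ q' x := by
  rcases hab with hab | h2
  · refine ⟨fun z => if z = a then q a - 1 else if z = b then q b - 1
        else if z = x then q x + 1 else q z,
      Or.inr ⟨a, b, x, hab, hxa.symm, hxb.symm, ha, hb, ?_, ?_, ?_, ?_⟩, ?_⟩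
    · simp
    · simp [Ne.symm hab]
    · simp [hxa.ne, hxb.ne]
    · intro z hz1 hz2 hz3; simp [hz1, hz2, hz3]
    · simp [hxa.ne, hxb.ne]
  · refine ⟨fun z => if z = a then q a - 2 else if z = x then q x + 1 else q z,
      Or.inl ⟨a, x, hxa.symm, h2, ?_, ?_, ?_⟩, ?_⟩
    · simp
    · simp [hxa.ne]
    · intro z hz1 hz2; simp [hz1, hz2]
    · simp [hxa.ne]

lemma reach_of_two_sources {x : V} (p p1 p2 p3 : V → ℕ)
    (hsplit : ∀ z, p z = p1 z + p2 z + p3 z)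
    {a b : V} (hxa : G.Adj x a) (hxb : G.Adj x b)
    (h1 : ∃ q, Relation.ReflTransGen (IsRubblingMove G) p1 q ∧ 1 ≤ q a)
    (h2 : ∃ q, Relation.ReflTransGen (IsRubblingMove G) p2 q ∧ 1 ≤ q b) :
    RubblingReachable G p x := by
  obtain ⟨q1, hq1, hq1a⟩ := h1
  obtain ⟨q2, hq2, hq2b⟩ := h2
  have step1 : Relation.ReflTransGen (IsRubblingMove G) p
      (fun z => q1 z + (p2 z + p3 z)) := by
    have := rtg_add (fun z => p2 z + p3 z) hq1
    have heq : p = (fun z => p1 z + (p2 z + p3 z)) := by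
      funext z; have := hsplit z; omega
    rw [heq]; exact this
  have step2 : Relation.ReflTransGen (IsRubblingMove G)
      (fun z => q1 z + (p2 z + p3 z)) (fun z => q2 z + (q1 z + p3 z)) := by
    have := rtg_add (fun z => q1 z + p3 z) hq2
    have heq : (fun z => q1 z + (p2 z + p3 z)) = (fun z => p2 z + (q1 z + p3 z)) := by
      funext z; omega
    rw [heq]; exact this
  set Q : V → ℕ := fun z => q2 z + (q1 z + p3 z) with hQ
  have hQa : 1 ≤ Q a := by show 1 ≤ q2 a + (q1 a + p3 a); omega
  have hQb : 1 ≤ Q b := by show 1 ≤ q2 b + (q1 b + p3 b); omega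
  have hab : a ≠ b ∨ 2 ≤ Q a := by
    by_cases h : a = b
    · right; subst h; show 2 ≤ q2 a + (q1 a + p3 a); omega
    · left; exact h
  obtain ⟨q', hmove, hq'⟩ := reach_last hxa hxb Q hab hQa hQb
  exact ⟨q', (step1.trans step2).tail hmove, hq'⟩

end Aux

lemma arith_bound (e d n : ℕ) (he : 1 ≤ e) (hed : e ≤ d) (hdn : d + 1 ≤ n) :
    (n - e - 1) * (2 ^ (e - 1) - 1) + (2 ^ e - 1)
      ≤ (n - d + 1) * (2 ^ (d - 1) - 1) + 1 := by
  induction d, hed using Nat.le_induction with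
  | base =>
    have h2e : 2 ^ e = 2 * 2 ^ (e - 1) := by
      conv_lhs => rw [show e = (e - 1) + 1 by omega]
      rw [pow_succ]; ring
    have hq : 1 ≤ 2 ^ (e - 1) := Nat.one_le_two_pow
    have hsplit : n - e + 1 = (n - e - 1) + 2 := by omega
    rw [hsplit, add_mul]
    omega
  | succ d hed ih =>
    have ih' := ih (by omega)
    have h2d : 2 ^ d = 2 * 2 ^ (d - 1) := by
      conv_lhs => rw [show d = (d - 1) + 1 by omega]
      rw [pow_succ]; ring
    have hq : 1 ≤ 2 ^ (d - 1) := Nat.one_le_two_pow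
    have key : (n - d + 1) * (2 ^ (d - 1) - 1) ≤ (n - d) * (2 ^ d - 1) := by
      calc (n - d + 1) * (2 ^ (d - 1) - 1)
          ≤ (2 * (n - d)) * (2 ^ (d - 1) - 1) := Nat.mul_le_mul_right _ (by omega)
        _ = (n - d) * (2 * (2 ^ (d - 1) - 1)) := by ring
        _ ≤ (n - d) * (2 ^ d - 1) := Nat.mul_le_mul_left _ (by omega)
    have hrw : n - (d + 1) + 1 = n - d := by omega
    rw [hrw]
    simp only [Nat.add_sub_cancel]
    omega


theorem rubblingNumber_le_of_diam' {V : Type*} [Fintype V] (G : SimpleGraph V)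
    (hconn : G.Connected) (n d : ℕ) (hn : Fintype.card V = n)
    (hd : G.diam = d) (hd1 : 1 ≤ d) :
    sInf {m | ∀ p : V → ℕ, ∑ v, p v = m → ∀ x, RubblingReachable G p x}
      ≤ (n - d + 1) * (2 ^ (d - 1) - 1) + 2 := by
  classical
  apply Nat.sInf_le
  intro p hsum x
  by_contra hnr
  have hpx : p x = 0 := by
    by_contra h
    exact hnr ⟨p, Relation.ReflTransGen.refl, by omega⟩
  have hV : Nonempty V := hconn.nonempty
  have htop : G.ediam ≠ ⊤ := G.ediam_ne_top_of_diam_ne_zero (by omega)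
  have hdle : ∀ v w : V, G.dist v w ≤ d := fun v w => hd ▸ SimpleGraph.dist_le_diam htop
  -- n ≥ d + 1 via a diametral geodesic
  have hnd : d + 1 ≤ n := by
    obtain ⟨a0, b0, hab0⟩ := G.exists_dist_eq_diam
    obtain ⟨u', hu'0, hu'k, hu'adj, hu'dist⟩ := exists_geodesic hconn a0 b0
    have hinj' : Set.InjOn u' (Finset.range (G.dist a0 b0 + 1)) := by
      intro i hi j hj hij
      simp only [Finset.coe_range, Set.mem_Iio] at hi hj
      have h1 := hu'dist i (by omega)
      have h2 := hu'dist j (by omega)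
      rw [← h1, ← h2, hij]
    have hcard : (Finset.image u' (Finset.range (G.dist a0 b0 + 1))).card
        = G.dist a0 b0 + 1 := by
      rw [Finset.card_image_of_injOn hinj', Finset.card_range]
    have hle := Finset.card_le_univ (Finset.image u' (Finset.range (G.dist a0 b0 + 1)))
    rw [hn] at hle
    omega
  -- eccentric vertex y
  obtain ⟨y, -, hsup⟩ := Finset.exists_mem_eq_sup (Finset.univ : Finset V)
    Finset.univ_nonempty (fun v => G.dist x v)
  set e := G.dist x y with he_def
  have he_le : ∀ v, G.dist x v ≤ e := by
    intro v
    have h := Finset.le_sup (f := fun v => G.dist x v) (Finset.mem_univ v)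
    rw [hsup] at h
    exact h
  have he_d : e ≤ d := hdle x y
  have he1 : 1 ≤ e := by
    obtain ⟨v, hvx⟩ := Fintype.exists_ne_of_one_lt_card (by omega) x
    have := hconn.pos_dist_of_ne (Ne.symm hvx)
    have := he_le v
    omega
  -- geodesic from x to y
  obtain ⟨u, hu0, huy, hadj, hdist⟩ := exists_geodesic hconn x y
  have hinj : ∀ i, i ≤ e → ∀ j, j ≤ e → u i = u j → i = j := by
    intro i hi j hj hij
    have h1 := hdist i hi
    have h2 := hdist j hj
    rw [← h1, ← h2, hij]
  -- single-vertex upper bound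
  have hub : ∀ v : V, p v ≤ 2 ^ (G.dist x v) - 1 := by
    intro v
    by_cases hvx : v = x
    · subst hvx; simp [SimpleGraph.dist_self, hpx]
    by_contra hcon
    have hc : 2 ^ (G.dist x v) ≤ p v := by omega
    obtain ⟨w, hw0, hwk, hwadj, hwdist⟩ := exists_geodesic hconn x v
    have hwinj : ∀ i, i ≤ G.dist x v → ∀ j, j ≤ G.dist x v → w i = w j → i = j := by
      intro i hi j hj hij
      have h1 := hwdist i hi
      have h2 := hwdist j hj
      rw [← h1, ← h2, hij]
    have := weight_reach (G := G) (G.dist x v) w hwadj hwinj p ?_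
    · rw [hw0] at this; exact hnr this
    · set k := G.dist x v
      have hmem : k ∈ Finset.range (k + 1) := by rw [Finset.mem_range]; omega
      calc 2 ^ k ≤ p v := hc
        _ = p (w k) * 2 ^ (k - k) := by rw [hwk, Nat.sub_self, pow_zero, mul_one]
        _ ≤ _ := Finset.single_le_sum (f := fun i => p (w i) * 2 ^ (k - i))
            (fun i _ => Nat.zero_le _) hmem
  -- no two exceptional vertices
  have hpair : ∀ v w : V, v ≠ x → w ≠ x → v ≠ w →
      2 ^ (G.dist x v - 1) ≤ p v → 2 ^ (G.dist x w - 1) ≤ p w → False := by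
    intro v w hvx hwx hvw hv hw
    obtain ⟨a, hxa, plana⟩ := deliver hconn hvx (p v) hv
    obtain ⟨b, hxb, planb⟩ := deliver hconn hwx (p w) hw
    refine hnr (reach_of_two_sources p
      (fun z => if z = v then p v else 0)
      (fun z => if z = w then p w else 0)
      (fun z => if z = v then 0 else if z = w then 0 else p z) ?_ hxa hxb plana planb)
    intro z
    by_cases h1 : z = v
    · subst h1; simp [hvw]
    · by_cases h2 : z = w
      · subst h2; simp [Ne.symm hvw, h1]
      · simp [h1, h2]
  -- path weight bound
  set W := ∑ i ∈ Finset.range (e + 1), p (u i) * 2 ^ (e - i) with hW_def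
  have hW : W ≤ 2 ^ e - 1 := by
    by_contra hcon
    have hc : 2 ^ e ≤ W := by omega
    have := weight_reach (G := G) e u hadj hinj p hc
    rw [hu0] at this; exact hnr this
  set Pset := Finset.image u (Finset.range (e + 1)) with hPset_def
  have hxP : x ∈ Pset := by
    rw [hPset_def]
    refine Finset.mem_image.mpr ⟨0, by simp, hu0⟩
  have hPcard : Pset.card = e + 1 := by
    rw [hPset_def, Finset.card_image_of_injOn, Finset.card_range]
    intro i hi j hj hij
    simp only [Finset.coe_range, Set.mem_Iio] at hi hj
    exact hinj i (by omega) j (by omega) hij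
  have hPsum : ∑ v ∈ Pset, p v = ∑ i ∈ Finset.range (e + 1), p (u i) := by
    rw [hPset_def]
    refine Finset.sum_image ?_
    intro i hi j hj hij
    simp only [Finset.coe_range, Set.mem_Iio] at hi hj
    exact hinj i (by omega) j (by omega) hij
  have hpath_le_W : ∑ i ∈ Finset.range (e + 1), p (u i) ≤ W := by
    rw [hW_def]
    refine Finset.sum_le_sum ?_
    intro i _
    have : 1 ≤ 2 ^ (e - i) := Nat.one_le_two_pow
    nlinarith [Nat.zero_le (p (u i))]
  have hcompl_card : Psetᶜ.card = n - (e + 1) := by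
    rw [Finset.card_compl, hPcard, hn]
  have h2e1 : 1 ≤ 2 ^ (e - 1) := Nat.one_le_two_pow
  have h2e : (2:ℕ) ^ e = 2 * 2 ^ (e - 1) := by
    conv_lhs => rw [show e = (e - 1) + 1 by omega]
    rw [pow_succ]; ring
  have harith := arith_bound e d n he1 he_d hnd
  have htotal := Finset.sum_add_sum_compl Pset p
  -- bound for non-exceptional off-path vertices
  have hsmall : ∀ w : V, w ∉ Pset → ¬ (2 ^ (G.dist x w - 1) ≤ p w) →
      p w ≤ 2 ^ (e - 1) - 1 := by
    intro w hwP hwexc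
    have hwx : w ≠ x := fun h => hwP (h ▸ hxP)
    have hd1w : 1 ≤ G.dist x w := hconn.pos_dist_of_ne (Ne.symm hwx)
    have hdw : G.dist x w ≤ e := he_le w
    have : (2:ℕ) ^ (G.dist x w - 1) ≤ 2 ^ (e - 1) :=
      Nat.pow_le_pow_right (by norm_num) (by omega)
    omega
  by_cases hcase : ∃ v, v ∉ Pset ∧ 2 ^ (G.dist x v - 1) ≤ p v
  · -- Case B : an exceptional vertex off the path
    obtain ⟨vs, hvsP, hvsexc⟩ := hcase
    have hvsx : vs ≠ x := fun h => hvsP (h ▸ hxP)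
    -- halved path weight
    have hWhalf : W ≤ 2 ^ (e - 1) - 1 := by
      by_contra hcon
      have hge : 2 ^ (e - 1) ≤ W := by omega
      -- source 1 : the path pebbles reach u 1
      set p1 : V → ℕ := fun z => if z ∈ Pset then p z else 0 with hp1
      have hsum1 : 2 ^ (e - 1) ≤ ∑ i ∈ Finset.range (e - 1 + 1),
          p1 (u (i + 1)) * 2 ^ (e - 1 - i) := by
        have hrw : e - 1 + 1 = e := by omega
        rw [hrw]
        have hW' : W = ∑ i ∈ Finset.range e, p (u (i + 1)) * 2 ^ (e - (i + 1)) := by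
          rw [hW_def, Finset.sum_range_succ']
          rw [hu0, hpx]
          simp
        have hcongr : ∀ i ∈ Finset.range e,
            p1 (u (i + 1)) * 2 ^ (e - 1 - i) = p (u (i + 1)) * 2 ^ (e - (i + 1)) := by
          intro i hi
          rw [Finset.mem_range] at hi
          have hmem : u (i + 1) ∈ Pset := by
            rw [hPset_def]
            exact Finset.mem_image.mpr ⟨i + 1, Finset.mem_range.mpr (by omega), rfl⟩
          have h1 : p1 (u (i + 1)) = p (u (i + 1)) := by simp [hp1, hmem]
          have h2 : e - 1 - i = e - (i + 1) := by omega
          rw [h1, h2]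
        rw [Finset.sum_congr rfl hcongr, ← hW']
        exact hge
      have hinj1 : ∀ i, i ≤ e - 1 → ∀ j, j ≤ e - 1 →
          (fun i => u (i + 1)) i = (fun i => u (i + 1)) j → i = j := by
        intro i hi j hj hij
        have hij' : u (i + 1) = u (j + 1) := hij
        have := hinj (i + 1) (by omega) (j + 1) (by omega) hij'
        omega
      have source1 : ∃ q, Relation.ReflTransGen (IsRubblingMove G) p1 q ∧ 1 ≤ q (u 1) :=
        weight_reach (G := G) (e - 1) (fun i => u (i + 1))
          (fun i hi => hadj (i + 1) (by omega)) hinj1 p1 hsum1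
      -- source 2 : the exceptional vertex delivers to a neighbor of x
      obtain ⟨b, hxb, source2⟩ := deliver hconn hvsx (p vs) hvsexc
      have hxu1 : G.Adj x (u 1) := by rw [← hu0]; exact hadj 0 (by omega)
      refine hnr (reach_of_two_sources p p1
        (fun z => if z = vs then p vs else 0)
        (fun z => if z ∈ Pset then 0 else if z = vs then 0 else p z)
        ?_ hxu1 hxb source1 source2)
      intro z
      by_cases h1 : z ∈ Pset
      · have : z ≠ vs := fun h => hvsP (h ▸ h1)
        simp [hp1, h1, this]
      · by_cases h2 : z = vs
        · subst h2; simp [hp1, h1]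
        · simp [hp1, h1, h2]
    -- now count
    have hvsmem : vs ∈ Psetᶜ := Finset.mem_compl.mpr hvsP
    have hsplit2 := Finset.add_sum_erase Psetᶜ p hvsmem
    have hvsbound : p vs ≤ 2 ^ e - 1 := by
      have h1 := hub vs
      have h2 : (2:ℕ) ^ (G.dist x vs) ≤ 2 ^ e :=
        Nat.pow_le_pow_right (by norm_num) (he_le vs)
      omega
    have hrest : ∑ w ∈ Psetᶜ.erase vs, p w ≤ (n - e - 2) * (2 ^ (e - 1) - 1) := by
      have hbnd : ∀ w ∈ Psetᶜ.erase vs, p w ≤ 2 ^ (e - 1) - 1 := by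
        intro w hw
        rw [Finset.mem_erase] at hw
        obtain ⟨hwvs, hwP⟩ := hw
        rw [Finset.mem_compl] at hwP
        refine hsmall w hwP ?_
        intro hwexc
        have hwx : w ≠ x := fun h => hwP (h ▸ hxP)
        exact hpair vs w hvsx hwx (Ne.symm hwvs) hvsexc hwexc
      calc ∑ w ∈ Psetᶜ.erase vs, p w
          ≤ (Psetᶜ.erase vs).card * (2 ^ (e - 1) - 1) := by
            have := Finset.sum_le_card_nsmul (Psetᶜ.erase vs) p (2 ^ (e - 1) - 1) hbnd
            simpa [smul_eq_mul] using this
        _ = (n - e - 2) * (2 ^ (e - 1) - 1) := by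
            rw [Finset.card_erase_of_mem hvsmem, hcompl_card,
              show n - (e + 1) - 1 = n - e - 2 from by omega]
    have hcard2 : e + 2 ≤ n := by
      have h1 : 1 ≤ Psetᶜ.card := Finset.card_pos.mpr ⟨vs, hvsmem⟩
      omega
    have hmerge : (n - e - 2) * (2 ^ (e - 1) - 1) + (2 ^ (e - 1) - 1)
        = (n - e - 1) * (2 ^ (e - 1) - 1) := by
      rw [show n - e - 1 = (n - e - 2) + 1 by omega, add_mul, one_mul]
    have hPsum_le : ∑ v ∈ Pset, p v ≤ 2 ^ (e - 1) - 1 := by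
      rw [hPsum]; omega
    omega
  · -- Case A : no exceptional vertex off the path
    push_neg at hcase
    have hoff : ∑ w ∈ Psetᶜ, p w ≤ (n - e - 1) * (2 ^ (e - 1) - 1) := by
      have hbnd : ∀ w ∈ Psetᶜ, p w ≤ 2 ^ (e - 1) - 1 := by
        intro w hw
        rw [Finset.mem_compl] at hw
        exact hsmall w hw (by intro hc; exact absurd hc (by simpa using hcase w hw))
      calc ∑ w ∈ Psetᶜ, p w ≤ Psetᶜ.card * (2 ^ (e - 1) - 1) := by
            have := Finset.sum_le_card_nsmul Psetᶜ p (2 ^ (e - 1) - 1) hbnd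
            simpa [smul_eq_mul] using this
        _ ≤ (n - e - 1) * (2 ^ (e - 1) - 1) := by
            rw [hcompl_card]
            exact Nat.mul_le_mul_right _ (by omega)
    have hPsum_le : ∑ v ∈ Pset, p v ≤ 2 ^ e - 1 := by rw [hPsum]; omega
    omega

/-- If `G` is a simple connected graph with `n` vertices and diameter `d ≥ 1`, then
`ρ(G) ≤ (n - d + 1)(2^(d-1) - 1) + 2`. -/
theorem rubblingNumber_le_of_diam {V : Type*} [Fintype V] (G : SimpleGraph V)
    (hconn : G.Connected) (n d : ℕ) (hn : Fintype.card V = n)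
    (hd : G.diam = d) (hd1 : 1 ≤ d) :
    rubblingNumber G ≤ (n - d + 1) * (2 ^ (d - 1) - 1) + 2 := by
  have h := rubblingNumber_le_of_diam' G hconn n d hn hd hd1
  exact h
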